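/- Let (W,S) be a Coxeter system. The intersection of two parabolic subgroups of W is again a parabolic subgroup: if P₁ = w₁ W_{I₁} w₁⁻¹ and P₂ = w₂ W_{I₂} w₂⁻¹ for some w₁, w₂ ∈ W and I₁, I₂ ⊆ S, then there exist w ∈ W and I ⊆ S such that P₁ ∩ P₂ = w W_I w⁻¹. -/

import Mathlib

open List

namespace CoxAux

open scoped Classical

lemma if_sign {p q : Prop} [Decidable p] [Decidable q] (σ : ℤˣ) :
    (if q then -(if p then -σ else σ) else (if p then -σ else σ))
      = σ * ((if p then (-1 : ℤˣ) else 1) * (if q then (-1 : ℤˣ) else 1)) := by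
  by_cases h1 : p <;> by_cases h2 : q <;> simp [h1, h2]

variable {B W : Type*} [Group W] {M : CoxeterMatrix B} (cs : CoxeterSystem M W)

local prefix:100 "s" => cs.simple
local prefix:100 "π" => cs.wordProd
local prefix:100 "ℓ" => cs.length
local prefix:100 "ris" => cs.rightInvSeq

lemma conj_eq_iff (p q a w : W) : p * w * q = a ↔ w = p⁻¹ * a * q⁻¹ := by
  constructor
  · intro h; rw [← h]; group
  · intro h; rw [h]; group

/-- the basic involution of the sign representation -/
noncomputable def toX (i : B) : Equiv.Perm (W × ℤˣ) :=
  Function.Involutive.toPerm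
    (fun p => (s i * p.1 * s i, if p.1 = s i then -p.2 else p.2))
    (by
      rintro ⟨w, ε⟩
      have hfix : s i * (s i * w * s i) * s i = w := by
        simp only [mul_assoc, cs.simple_mul_simple_cancel_left]
        rw [cs.simple_mul_simple_self, mul_one]
      by_cases h : w = s i
      · simp [h, cs.simple_mul_simple_self]
      · have h2 : ¬ (s i * w * s i = s i) := by
          intro hc
          exact h (by rw [← hfix, hc]; rw [cs.simple_mul_simple_cancel_right])
        simp [h, h2, hfix])

lemma toX_apply (i : B) (w : W) (ε : ℤˣ) :
    toX cs i (w, ε) = (s i * w * s i, if w = s i then -ε else ε) := rfl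

lemma semiconj_pow (i j : B) (k : ℕ) : s j * (s i * s j) ^ k = (s j * s i) ^ k * s j := by
  have h : SemiconjBy (s j) (s i * s j) (s j * s i) := by
    unfold SemiconjBy; group
  exact (h.pow_right k)

lemma inv_pow_simple (i j : B) (k : ℕ) : ((s i * s j) ^ k)⁻¹ = (s j * s i) ^ k := by
  rw [← inv_pow, mul_inv_rev, cs.inv_simple, cs.inv_simple]

lemma toX_mul_pow (i j : B) (k : ℕ) (w : W) (ε : ℤˣ) :
    ((toX cs i * toX cs j) ^ k) (w, ε) =
      ((s i * s j) ^ k * w * (s j * s i) ^ k,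
        ε * ∏ l ∈ Finset.range (2 * k),
          (if w = (s j * s i) ^ l * s j then (-1 : ℤˣ) else 1)) := by
  induction k with
  | zero => simp
  | succ k ih =>
    rw [pow_succ']
    have hsplit : ((toX cs i * toX cs j) * (toX cs i * toX cs j) ^ k) (w, ε)
        = (toX cs i) ((toX cs j) (((toX cs i * toX cs j) ^ k) (w, ε))) := rfl
    rw [hsplit, ih]
    rw [toX_apply, toX_apply]
    have hcond1 : ((s i * s j) ^ k * w * (s j * s i) ^ k = s j)
        ↔ (w = (s j * s i) ^ (2 * k) * s j) := by
      rw [conj_eq_iff, inv_pow_simple, inv_pow_simple]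
      rw [mul_assoc, semiconj_pow, ← mul_assoc, ← pow_add, two_mul]
    have key : (s j * s i) ^ k * (s j * s i * s j) * (s i * s j) ^ k
        = (s j * s i) ^ (2 * k + 1) * s j := by
      rw [show (s j * s i) ^ k * (s j * s i * s j) * (s i * s j) ^ k
          = (s j * s i) ^ k * (s j * s i) * (s j * (s i * s j) ^ k) from by group]
      rw [semiconj_pow, ← pow_succ, ← mul_assoc, ← pow_add]
      rw [show k + 1 + k = 2 * k + 1 from by ring]
    have hcond2 : (s j * ((s i * s j) ^ k * w * (s j * s i) ^ k) * s j = s i)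
        ↔ (w = (s j * s i) ^ (2 * k + 1) * s j) := by
      rw [conj_eq_iff, cs.inv_simple, conj_eq_iff, inv_pow_simple, inv_pow_simple, key]
    have hfst : s i * (s j * ((s i * s j) ^ k * w * (s j * s i) ^ k) * s j) * s i
        = (s i * s j) ^ (k + 1) * w * (s j * s i) ^ (k + 1) := by
      rw [show ((s i * s j : W)) ^ (k + 1) = (s i * s j) * (s i * s j) ^ k from pow_succ' _ _,
        show ((s j * s i : W)) ^ (k + 1) = (s j * s i) ^ k * (s j * s i) from pow_succ _ _]
      group
    rw [Prod.ext_iff]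
    refine ⟨hfst, ?_⟩
    show _ = ε * ∏ l ∈ Finset.range (2 * (k + 1)), _
    rw [show 2 * (k + 1) = 2 * k + 1 + 1 by ring, Finset.prod_range_succ,
      Finset.prod_range_succ]
    rw [if_congr hcond1 rfl rfl, if_congr hcond2 rfl rfl, if_sign]
    simp [mul_assoc]


-- placeholders from previous file


lemma liftable : M.IsLiftable (toX cs) := by
  intro i j
  apply Equiv.ext
  rintro ⟨w, ε⟩
  rw [Equiv.Perm.coe_one, id_eq, toX_mul_pow, Prod.ext_iff]
  constructor
  · show (s i * s j) ^ M i j * w * (s j * s i) ^ M i j = w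
    rw [cs.simple_mul_simple_pow, cs.simple_mul_simple_pow', one_mul, mul_one]
  · show ε * ∏ l ∈ Finset.range (2 * M i j), _ = ε
    rw [two_mul, Finset.prod_range_add]
    have hper : ∀ l : ℕ, ((if w = (s j * s i) ^ (M i j + l) * s j then (-1:ℤˣ) else 1))
        = (if w = (s j * s i) ^ l * s j then (-1:ℤˣ) else 1) := by
      intro l
      rw [pow_add, cs.simple_mul_simple_pow', one_mul]
    rw [Finset.prod_congr rfl (fun l _ => hper l), Int.units_mul_self, mul_one]

/-- The sign representation on `W × ℤˣ`. -/
noncomputable def phi : W →* Equiv.Perm (W × ℤˣ) := cs.lift ⟨toX cs, liftable cs⟩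

lemma phi_simple (i : B) : phi cs (s i) = toX cs i := cs.lift_apply_simple (liftable cs) i

/-- The sign of `t` relative to `w`. -/
noncomputable def eta (w t : W) : ℤˣ := (phi cs w (t, 1)).2

lemma phi_wordProd (ω : List B) (t : W) (ε : ℤˣ) :
    phi cs (π ω) (t, ε) =
      (π ω * t * (π ω)⁻¹,
        ε * ((ris ω).map (fun u => if t = u then (-1 : ℤˣ) else 1)).prod) := by
  induction ω with
  | nil => simp
  | cons i ω ih =>
    rw [cs.wordProd_cons, map_mul, phi_simple]
    show toX cs i (phi cs (π ω) (t, ε)) = _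
    rw [ih, toX_apply]
    have hris : ris (i :: ω) = ((π ω)⁻¹ * s i * (π ω)) :: ris ω := rfl
    rw [hris]
    rw [Prod.ext_iff]
    constructor
    · show s i * (π ω * t * (π ω)⁻¹) * s i = (s i * π ω) * t * (s i * π ω)⁻¹
      rw [mul_inv_rev, cs.inv_simple]; group
    · show (if π ω * t * (π ω)⁻¹ = s i then -_ else _) = _
      have hc : (π ω * t * (π ω)⁻¹ = s i) ↔ (t = (π ω)⁻¹ * s i * π ω) := by
        rw [conj_eq_iff, inv_inv]
      rw [if_congr hc rfl rfl, List.map_cons, List.prod_cons]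
      by_cases h : t = (π ω)⁻¹ * s i * π ω <;> simp [h, mul_assoc]

lemma eta_wordProd (ω : List B) (t : W) :
    eta cs (π ω) t = ((ris ω).map (fun u => if t = u then (-1 : ℤˣ) else 1)).prod := by
  unfold eta; rw [phi_wordProd, one_mul]

lemma phi_apply (w t : W) (ε : ℤˣ) :
    phi cs w (t, ε) = (w * t * w⁻¹, ε * eta cs w t) := by
  obtain ⟨ω, rfl⟩ := cs.wordProd_surjective w
  rw [phi_wordProd, eta_wordProd]

lemma eta_mul (u v t : W) :
    eta cs (u * v) t = eta cs v t * eta cs u (v * t * v⁻¹) := by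
  have h : phi cs (u * v) (t, 1) = phi cs u (phi cs v (t, 1)) := by
    rw [map_mul]; rfl
  unfold eta
  rw [h, phi_apply, phi_apply, one_mul]
  rfl

lemma mem_of_sign_neg {t : W} {l : List W}
    (h : (l.map (fun u => if t = u then (-1 : ℤˣ) else 1)).prod = -1) : t ∈ l := by
  by_contra hmem
  have h1 : (l.map (fun u => if t = u then (-1 : ℤˣ) else 1)).prod = 1 := by
    apply List.prod_eq_one
    rintro x hx
    rw [List.mem_map] at hx
    obtain ⟨u, hu, rfl⟩ := hx
    rw [if_neg (fun e => hmem (by rw [e]; exact hu))]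
  rw [h1] at h
  exact (by decide : ¬ ((1 : ℤˣ) = -1)) h

lemma mul_lt_of_eta_neg {w t : W} (h : eta cs w t = -1) : ℓ (w * t) < ℓ w := by
  obtain ⟨ω, hred, rfl⟩ := cs.exists_reduced_word' w
  rw [eta_wordProd] at h
  exact (cs.isRightInversion_of_mem_rightInvSeq hred (mem_of_sign_neg h)).2

lemma eta_refl_self {t : W} (ht : cs.IsReflection t) : eta cs t t = -1 := by
  obtain ⟨v, i, rfl⟩ := ht
  set t := v * s i * v⁻¹ with hdef
  set a := eta cs v⁻¹ t with ha
  set b := eta cs v (s i) with hb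
  have h1 : phi cs v⁻¹ (t, 1) = (s i, a) := by
    rw [phi_apply, one_mul, ← ha]
    congr 1
    rw [hdef]; group
  have h2 : phi cs (s i) (s i, a) = (s i, -a) := by
    rw [phi_simple, toX_apply, if_pos rfl, cs.simple_mul_simple_cancel_right]
  have h3 : phi cs v (s i, -a) = (t, -(a * b)) := by
    rw [phi_apply, ← hdef, ← hb, neg_mul]
  have hid : phi cs v (phi cs v⁻¹ (t, 1)) = (t, 1) := by
    have : phi cs v (phi cs v⁻¹ (t, 1)) = (phi cs (v * v⁻¹)) (t, 1) := by
      rw [map_mul]; rfl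
    rw [this, mul_inv_cancel, map_one]; rfl
  have hprod : a * b = 1 := by
    rw [h1, phi_apply, ← hdef, ← hb] at hid
    exact (Prod.ext_iff.mp hid).2
  have hphit : phi cs t (t, 1) = (t, -(a * b)) := by
    have hsplit : phi cs t (t, 1) = phi cs v (phi cs (s i) (phi cs v⁻¹ (t, 1))) := by
      rw [hdef, map_mul, map_mul]; rfl
    rw [hsplit, h1, h2, h3]
  unfold eta
  rw [hphit, hprod]

lemma eta_neg_of_lt {w t : W} (ht : cs.IsReflection t) (h : ℓ (w * t) < ℓ w) :
    eta cs w t = -1 := by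
  have hw : w = (w * t) * t := by rw [mul_assoc, ht.mul_self, mul_one]
  have h1 : eta cs w t = eta cs t t * eta cs (w * t) (t * t * t⁻¹) := by
    nth_rw 1 [hw]; exact eta_mul cs (w * t) t t
  rw [ht.mul_self, one_mul, ht.inv, eta_refl_self cs ht] at h1
  rcases Int.units_eq_one_or (eta cs (w * t) t) with h2 | h2
  · rw [h1, h2, mul_one]
  · exfalso
    have := mul_lt_of_eta_neg cs h2
    rw [mul_assoc, ht.mul_self, mul_one] at this
    omega

/-- Strong exchange, right version. -/
theorem exchange_right {ω : List B} {t : W} (ht : cs.IsReflection t)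
    (hl : ℓ (π ω * t) < ℓ (π ω)) :
    ∃ j < ω.length, π (ω.eraseIdx j) = π ω * t := by
  have h := eta_neg_of_lt cs ht hl
  rw [eta_wordProd] at h
  have hmem := mem_of_sign_neg h
  obtain ⟨j, hj, hjt⟩ := List.mem_iff_getElem.mp hmem
  rw [cs.length_rightInvSeq] at hj
  refine ⟨j, hj, ?_⟩
  rw [← cs.wordProd_mul_getD_rightInvSeq ω j]
  congr 1
  rw [List.getD_eq_getElem _ 1 (by rw [cs.length_rightInvSeq]; exact hj), hjt]

/-- Strong exchange, left version. -/
theorem exchange_left {ω : List B} {t : W} (ht : cs.IsReflection t)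
    (hl : ℓ (t * π ω) < ℓ (π ω)) :
    ∃ j < ω.length, π (ω.eraseIdx j) = t * π ω := by
  have hlen : ℓ (π ω.reverse * t) < ℓ (π ω.reverse) := by
    rw [cs.wordProd_reverse]
    have h1 : (π ω)⁻¹ * t = (t * π ω)⁻¹ := by rw [mul_inv_rev, ht.inv]
    rw [h1, cs.length_inv, cs.length_inv]
    exact hl
  have h := eta_neg_of_lt cs ht hlen
  rw [eta_wordProd, cs.rightInvSeq_reverse] at h
  have hmem : t ∈ cs.leftInvSeq ω := by
    have := mem_of_sign_neg h
    rwa [List.mem_reverse] at this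
  obtain ⟨j, hj, hjt⟩ := List.mem_iff_getElem.mp hmem
  rw [cs.length_leftInvSeq] at hj
  refine ⟨j, hj, ?_⟩
  rw [← cs.getD_leftInvSeq_mul_wordProd ω j]
  congr 1
  rw [List.getD_eq_getElem _ 1 (by rw [cs.length_leftInvSeq]; exact hj), hjt]

/-! ### Standard parabolic subgroups -/

/-- The standard parabolic subgroup generated by `{s i | i ∈ I}`. -/
abbrev WI (I : Set B) : Subgroup W := Subgroup.closure (cs.simple '' I)

lemma wordProd_mem_WI {I : Set B} {ω : List B} (h : ∀ i ∈ ω, i ∈ I) :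
    π ω ∈ WI cs I := by
  induction ω with
  | nil => simp only [cs.wordProd_nil]; exact one_mem _
  | cons i ω ih =>
    rw [cs.wordProd_cons]
    exact mul_mem (Subgroup.subset_closure ⟨i, h i List.mem_cons_self, rfl⟩)
      (ih (fun j hj => h j (List.mem_cons_of_mem _ hj)))

lemma mem_WI_iff {I : Set B} {w : W} :
    w ∈ WI cs I ↔ ∃ ω : List B, (∀ i ∈ ω, i ∈ I) ∧ π ω = w := by
  constructor
  · intro hw
    induction hw using Subgroup.closure_induction with
    | mem x hx =>
      obtain ⟨i, hi, rfl⟩ := hx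
      exact ⟨[i], by simpa using hi, cs.wordProd_singleton i⟩
    | one => exact ⟨[], by simp, cs.wordProd_nil⟩
    | mul x y hx hy ihx ihy =>
      obtain ⟨ω₁, h₁, rfl⟩ := ihx
      obtain ⟨ω₂, h₂, rfl⟩ := ihy
      exact ⟨ω₁ ++ ω₂, by
        intro i hi
        rcases List.mem_append.mp hi with h | h
        exacts [h₁ i h, h₂ i h], cs.wordProd_append ω₁ ω₂⟩
    | inv x hx ihx =>
      obtain ⟨ω, h₁, rfl⟩ := ihx
      exact ⟨ω.reverse, fun i hi => h₁ i (List.mem_reverse.mp hi),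
        cs.wordProd_reverse ω⟩
  · rintro ⟨ω, hI, rfl⟩
    exact wordProd_mem_WI cs hI

/-- Every element of a standard parabolic subgroup has a reduced word with letters in `I`. -/
lemma exists_reduced_word_WI {I : Set B} {w : W} (hw : w ∈ WI cs I) :
    ∃ ω : List B, cs.IsReduced ω ∧ (∀ i ∈ ω, i ∈ I) ∧ π ω = w := by
  have hex : ∃ n, ∃ ω : List B, ω.length = n ∧ (∀ i ∈ ω, i ∈ I) ∧ π ω = w := by
    obtain ⟨ω, hI, hπ⟩ := (mem_WI_iff cs).mp hw
    exact ⟨ω.length, ω, rfl, hI, hπ⟩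
  obtain ⟨ω, hlen, hI, hπ⟩ := Nat.find_spec hex
  refine ⟨ω, ?_, hI, hπ⟩
  by_contra hnr
  have hlt : ℓ (π ω) < ω.length := lt_of_le_of_ne (cs.length_wordProd_le ω) hnr
  have hQ : ∃ k, ¬ cs.IsReduced (ω.take (k + 1)) := by
    have hω : ω ≠ [] := by
      rintro rfl; simp at hlt
    refine ⟨ω.length - 1, ?_⟩
    rw [show ω.length - 1 + 1 = ω.length from by
      have := List.length_pos_iff.mpr hω; omega]
    rw [List.take_length]
    exact hnr
  set k0 := Nat.find hQ with hk0def
  have hk0 : ¬ cs.IsReduced (ω.take (k0 + 1)) := Nat.find_spec hQ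
  have hred : cs.IsReduced (ω.take k0) := by
    rcases Nat.eq_zero_or_pos k0 with h | h
    · rw [h]; simp [CoxeterSystem.IsReduced]
    · have := Nat.find_min hQ (show k0 - 1 < k0 from by omega)
      rw [show k0 - 1 + 1 = k0 from by omega] at this
      exact not_not.mp this
  have hk0lt : k0 < ω.length := by
    by_contra hge
    push_neg at hge
    apply hk0
    rw [List.take_of_length_le (by omega)]
    rw [List.take_of_length_le hge] at hred
    exact hred
  have hsplit : ω.take (k0 + 1) = ω.take k0 ++ [ω.get ⟨k0, hk0lt⟩] := by
    rw [List.take_succ]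
    simp [List.getElem?_eq_getElem hk0lt]
  set i := ω.get ⟨k0, hk0lt⟩ with hidef
  set u := π (ω.take k0) with hudef
  have hlu : ℓ u = k0 := by
    have := hred
    unfold CoxeterSystem.IsReduced at this
    rw [← hudef] at this
    rw [this, List.length_take]
    omega
  have husi : π (ω.take (k0 + 1)) = u * s i := by
    rw [hsplit, cs.wordProd_append, cs.wordProd_singleton]
  have hle : ℓ (u * s i) ≤ k0 := by
    have h1 : ℓ (π (ω.take (k0 + 1))) ≤ k0 + 1 := by
      have := cs.length_wordProd_le (ω.take (k0 + 1))
      rw [List.length_take] at this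
      omega
    have h2 : ℓ (π (ω.take (k0 + 1))) ≠ k0 + 1 := by
      intro hc
      apply hk0
      unfold CoxeterSystem.IsReduced
      rw [hc, List.length_take]
      omega
    rw [husi] at h1 h2
    omega
  have hdesc : ℓ (u * s i) < ℓ u := by
    rcases cs.length_mul_simple u i with h | h
    · omega
    · omega
  obtain ⟨j, hj, hje⟩ := exchange_right cs (cs.isReflection_simple i) hdesc
  set ω' := (ω.take k0).eraseIdx j ++ ω.drop (k0 + 1) with hω'def
  have hπ' : π ω' = w := by
    rw [hω'def, cs.wordProd_append, hje, ← husi, ← cs.wordProd_append,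
      List.take_append_drop, hπ]
  have hI' : ∀ i' ∈ ω', i' ∈ I := by
    intro i' hi'
    rcases List.mem_append.mp hi' with h | h
    · exact hI i' ((List.take_sublist _ _).subset ((List.eraseIdx_sublist _ _).subset h))
    · exact hI i' ((List.drop_sublist _ _).subset h)
  have hlen' : ω'.length < ω.length := by
    have e1 : (ω.take k0).length = k0 := by rw [List.length_take]; omega
    have e2 : ((ω.take k0).eraseIdx j).length = k0 - 1 := by
      rw [List.length_eraseIdx_of_lt hj, e1]
    have hjk : j < k0 := by omega
    rw [hω'def, List.length_append, e2, List.length_drop]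
    omega
  exact Nat.find_min hex
    (show ω'.length < Nat.find hex from lt_of_lt_of_le hlen' (le_of_eq hlen))
    ⟨ω', rfl, hI', hπ'⟩

lemma exists_left_descent_WI {I : Set B} {w : W} (hw : w ∈ WI cs I) (hne : w ≠ 1) :
    ∃ i ∈ I, ℓ (s i * w) < ℓ w ∧ s i * w ∈ WI cs I := by
  obtain ⟨ω, hred, hI, rfl⟩ := exists_reduced_word_WI cs hw
  cases ω with
  | nil => exact absurd (cs.wordProd_nil) hne
  | cons i ω' =>
    refine ⟨i, hI i List.mem_cons_self, ?_, ?_⟩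
    · rw [cs.wordProd_cons, cs.simple_mul_simple_cancel_left]
      have h1 : ℓ (π ω') ≤ ω'.length := cs.length_wordProd_le ω'
      have h2 : ℓ (π (i :: ω')) = ω'.length + 1 := by
        rw [hred]; simp
      rw [← cs.wordProd_cons]
      omega
    · rw [cs.wordProd_cons, cs.simple_mul_simple_cancel_left]
      exact wordProd_mem_WI cs (fun j hj => hI j (List.mem_cons_of_mem _ hj))

lemma exists_right_descent_WI {I : Set B} {w : W} (hw : w ∈ WI cs I) (hne : w ≠ 1) :
    ∃ i ∈ I, ℓ (w * s i) < ℓ w ∧ w * s i ∈ WI cs I := by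
  obtain ⟨i, hi, hlen, hmem⟩ := exists_left_descent_WI cs (inv_mem hw)
    (by simpa using hne)
  refine ⟨i, hi, ?_, ?_⟩
  · have h1 : (s i * w⁻¹)⁻¹ = w * s i := by rw [mul_inv_rev, inv_inv, cs.inv_simple]
    rw [← cs.length_inv w, ← cs.length_inv (w * s i), ← h1, inv_inv]
    exact hlen
  · have h1 : w * s i = (s i * w⁻¹)⁻¹ := by rw [mul_inv_rev, inv_inv, cs.inv_simple]
    rw [h1]
    exact inv_mem hmem

/-- If `d` is of minimal length in `d W_J`, then lengths add:
`ℓ(d v) = ℓ(d) + ℓ(v)` for `v ∈ W_J`. -/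
lemma length_add_right {J : Set B} {d : W} (hd : ∀ b ∈ WI cs J, ℓ d ≤ ℓ (d * b)) :
    ∀ v ∈ WI cs J, ℓ (d * v) = ℓ d + ℓ v := by
  intro v hv
  generalize hgen : ℓ v = n
  induction n using Nat.strong_induction_on generalizing v with
  | _ n ih =>
    by_cases hone : v = 1
    · rw [hone] at hgen ⊢
      simp at hgen ⊢
      omega
    obtain ⟨j, hjJ, hjlen, hjmem⟩ := exists_right_descent_WI cs hv hone
    set v' := v * s j with hv'def
    have hvv' : v = v' * s j := by
      rw [hv'def, cs.simple_mul_simple_cancel_right]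
    have hlv' : ℓ v' + 1 = ℓ v := by
      rcases cs.length_mul_simple v j with h | h
      · rw [← hv'def] at h; omega
      · rw [← hv'def] at h; omega
    have hih : ℓ (d * v') = ℓ d + ℓ v' := by
      exact ih (ℓ v') (by omega) v' hjmem rfl
    rcases cs.length_mul_simple (d * v') j with h | h
    · rw [hvv', ← mul_assoc, h, hih]
      omega
    · -- contradiction via strong exchange
      exfalso
      obtain ⟨α, hαred, hαeq⟩ := cs.exists_reduced_word' d
      obtain ⟨β, hβred, hβI, hβeq⟩ := exists_reduced_word_WI cs hjmem
      have hγeq : π (α ++ β) = d * v' := by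
        rw [cs.wordProd_append, ← hαeq, hβeq]
      have hlt : ℓ (π (α ++ β) * s j) < ℓ (π (α ++ β)) := by
        rw [hγeq]; omega
      obtain ⟨k, hk, hke⟩ := exchange_right cs (cs.isReflection_simple j) hlt
      rw [hγeq] at hke
      rcases lt_or_ge k α.length with hka | hka
      · -- erased in α: contradicts minimality of d
        rw [List.eraseIdx_append_of_lt_length hka, cs.wordProd_append] at hke
        have hmemJ : v' * s j * v'⁻¹ ∈ WI cs J :=
          mul_mem (mul_mem hjmem (Subgroup.subset_closure ⟨j, hjJ, rfl⟩)) (inv_mem hjmem)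
        have heq2 : d * (v' * s j * v'⁻¹) = π (α.eraseIdx k) := by
          have : d * v' * s j = π (α.eraseIdx k) * π β := hke.symm
          rw [hβeq] at this
          calc d * (v' * s j * v'⁻¹) = (d * v' * s j) * v'⁻¹ := by group
            _ = π (α.eraseIdx k) * v' * v'⁻¹ := by rw [this]
            _ = π (α.eraseIdx k) := by group
        have hup : ℓ d ≤ ℓ (π (α.eraseIdx k)) := heq2 ▸ hd _ hmemJ
        have hdown : ℓ (π (α.eraseIdx k)) ≤ α.length - 1 := by
          have h1 := cs.length_wordProd_le (α.eraseIdx k)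
          rw [List.length_eraseIdx_of_lt hka] at h1
          exact h1
        have hαlen : α.length = ℓ d := by
          unfold CoxeterSystem.IsReduced at hαred
          rw [hαeq, hαred]
        omega
      · -- erased in β: contradicts length of v'
        rw [List.eraseIdx_append_of_length_le hka, cs.wordProd_append, ← hαeq] at hke
        have heq2 : v = π (β.eraseIdx (k - α.length)) := by
          have h := hke.symm
          rw [mul_assoc] at h
          have h2 := mul_left_cancel h
          rw [← hvv'] at h2
          exact h2
        have hdown : ℓ v ≤ β.length - 1 := by
          have h1 := cs.length_wordProd_le (β.eraseIdx (k - α.length))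
          have h2 : k - α.length < β.length := by
            rw [List.length_append] at hk
            omega
          rw [List.length_eraseIdx_of_lt h2] at h1
          rw [heq2]
          exact h1
        have hβlen : β.length = ℓ v' := by
          unfold CoxeterSystem.IsReduced at hβred
          rw [← hβeq, hβred]
        omega

/-- If `d` is of minimal length in `W_I d`, then lengths add on the left. -/
lemma length_add_left {I : Set B} {d : W} (hd : ∀ a ∈ WI cs I, ℓ d ≤ ℓ (a * d)) :
    ∀ a ∈ WI cs I, ℓ (a * d) = ℓ a + ℓ d := by
  have hd' : ∀ b ∈ WI cs I, ℓ d⁻¹ ≤ ℓ (d⁻¹ * b) := by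
    intro b hb
    rw [cs.length_inv]
    have : d⁻¹ * b = (b⁻¹ * d)⁻¹ := by group
    rw [this, cs.length_inv]
    exact hd b⁻¹ (inv_mem hb)
  intro a ha
  have h1 : ℓ (a * d) = ℓ (d⁻¹ * a⁻¹) := by
    have : d⁻¹ * a⁻¹ = (a * d)⁻¹ := by group
    rw [this, cs.length_inv]
  rw [h1, length_add_right cs hd' a⁻¹ (inv_mem ha), cs.length_inv, cs.length_inv]
  omega

/-- Kilmoyer's theorem: if `d` has minimal length in the double coset `W_I d W_J`, then
`W_I ∩ d W_J d⁻¹` is the standard parabolic subgroup on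
`K = {i ∈ I | ∃ j ∈ J, d s_j d⁻¹ = s_i}`. -/
theorem kilmoyer {I J : Set B} {d : W}
    (hmin : ∀ a ∈ WI cs I, ∀ b ∈ WI cs J, ℓ d ≤ ℓ (a * (d * b))) :
    WI cs I ⊓ (WI cs J).map (MulAut.conj d).toMonoidHom
      = WI cs {i : B | i ∈ I ∧ ∃ j ∈ J, d * s j * d⁻¹ = s i} := by
  set K : Set B := {i : B | i ∈ I ∧ ∃ j ∈ J, d * s j * d⁻¹ = s i} with hKdef
  have hR : ∀ b ∈ WI cs J, ℓ d ≤ ℓ (d * b) := by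
    intro b hb
    simpa using hmin 1 (one_mem _) b hb
  have hL : ∀ a ∈ WI cs I, ℓ d ≤ ℓ (a * d) := by
    intro a ha
    simpa using hmin a ha 1 (one_mem _)
  apply _root_.le_antisymm
  · -- hard direction
    intro x hx
    obtain ⟨hxI, hxmap⟩ := hx
    generalize hgen : ℓ x = n
    induction n using Nat.strong_induction_on generalizing x with
    | _ n ih =>
      by_cases hne : x = 1
      · rw [hne]; exact one_mem _
      obtain ⟨i, hiI, hilen, himem⟩ := exists_left_descent_WI cs hxI hne
      obtain ⟨v, hv, hveq⟩ := Subgroup.mem_map.mp hxmap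
      rw [MulEquiv.coe_toMonoidHom, MulAut.conj_apply] at hveq
      have hsiI : s i ∈ WI cs I := Subgroup.subset_closure ⟨i, hiI, rfl⟩
      have hlsid : ℓ (s i * d) = 1 + ℓ d := by
        rw [length_add_left cs hL (s i) hsiI, cs.length_simple]
      -- find j ∈ J with d * s j * d⁻¹ = s i
      have hiK : i ∈ K := by
        obtain ⟨α, hαred, hαeq⟩ := cs.exists_reduced_word' d
        obtain ⟨β, hβred, hβJ, hβeq⟩ := exists_reduced_word_WI cs hv
        have hαlen : α.length = ℓ d := by
          unfold CoxeterSystem.IsReduced at hαred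
          rw [hαeq, hαred]
        have hβlen : β.length = ℓ v := by
          unfold CoxeterSystem.IsReduced at hβred
          rw [← hβeq, hβred]
        have hγeq : π (α ++ β) = d * v := by
          rw [cs.wordProd_append, ← hαeq, hβeq]
        have hxd : x * d = d * v := by
          rw [← hveq]; group
        have hlen1 : ℓ (d * v) = ℓ x + ℓ d := by
          rw [← hxd, length_add_left cs hL x hxI]
        have hlen2 : ℓ (s i * (d * v)) = ℓ (s i * x) + ℓ d := by
          have : s i * (d * v) = (s i * x) * d := by rw [← hxd]; group
          rw [this, length_add_left cs hL (s i * x) himem]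
        have hlt : ℓ (s i * π (α ++ β)) < ℓ (π (α ++ β)) := by
          rw [hγeq, hlen1, hlen2]
          omega
        obtain ⟨k, hk, hke⟩ := exchange_left cs (cs.isReflection_simple i) hlt
        rw [hγeq] at hke
        rcases lt_or_ge k α.length with hka | hka
        · exfalso
          rw [List.eraseIdx_append_of_lt_length hka, cs.wordProd_append, hβeq] at hke
          have h2 : π (α.eraseIdx k) = s i * d := by
            have h3 : π (α.eraseIdx k) * v = (s i * d) * v := by
              rw [hke]; group
            exact mul_right_cancel h3
          have hup : ℓ (s i * d) ≤ α.length - 1 := by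
            have h1 := cs.length_wordProd_le (α.eraseIdx k)
            rw [List.length_eraseIdx_of_lt hka, h2] at h1
            exact h1
          omega
        · rw [List.eraseIdx_append_of_length_le hka, cs.wordProd_append, ← hαeq] at hke
          set y := π (β.eraseIdx (k - α.length)) * v⁻¹ with hydef
          have hyJ : y ∈ WI cs J := by
            apply mul_mem _ (inv_mem hv)
            apply wordProd_mem_WI
            intro j hj
            exact hβJ j ((List.eraseIdx_sublist _ _).subset hj)
          have hdy : d * y = s i * d := by
            rw [hydef, ← mul_assoc, hke]; group
          have hly : ℓ y = 1 := by
            have := length_add_right cs hR y hyJ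
            rw [hdy, hlsid] at this
            omega
          obtain ⟨γ, hγred, hγJ, hγeq2⟩ := exists_reduced_word_WI cs hyJ
          have hγlen : γ.length = 1 := by
            unfold CoxeterSystem.IsReduced at hγred
            rw [hγeq2, hly] at hγred
            exact hγred.symm
          obtain ⟨j, rfl⟩ := List.length_eq_one_iff.mp hγlen
          have hyj : y = s j := by rw [← hγeq2, cs.wordProd_singleton]
          refine ⟨hiI, j, hγJ j (List.mem_singleton_self j), ?_⟩
          rw [← hyj, hdy]; group
      -- conclude by induction
      have hsix_map : s i * x ∈ (WI cs J).map (MulAut.conj d).toMonoidHom := by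
        obtain ⟨hiI', j, hjJ, hconj⟩ := hiK
        apply Subgroup.mem_map.mpr
        refine ⟨s j * v, mul_mem (Subgroup.subset_closure ⟨j, hjJ, rfl⟩) hv, ?_⟩
        rw [MulEquiv.coe_toMonoidHom, MulAut.conj_apply, ← hveq, ← hconj]
        group
      have hind : s i * x ∈ WI cs K :=
        ih (ℓ (s i * x)) (by omega) himem hsix_map rfl
      have : x = s i * (s i * x) := by rw [cs.simple_mul_simple_cancel_left]
      rw [this]
      exact mul_mem (Subgroup.subset_closure ⟨i, hiK, rfl⟩) hind
  · -- easy direction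
    apply Subgroup.closure_le _ |>.mpr
    rintro x ⟨i, ⟨hiI, j, hjJ, hconj⟩, rfl⟩
    constructor
    · exact Subgroup.subset_closure ⟨i, hiI, rfl⟩
    · apply Subgroup.mem_map.mpr
      exact ⟨s j, Subgroup.subset_closure ⟨j, hjJ, rfl⟩, by
        rw [MulEquiv.coe_toMonoidHom, MulAut.conj_apply, hconj]⟩

/-! ### Assembly -/

lemma conj_map_conj_map (x y : W) (H : Subgroup W) :
    (H.map (MulAut.conj y).toMonoidHom).map (MulAut.conj x).toMonoidHom
      = H.map (MulAut.conj (x * y)).toMonoidHom := by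
  rw [Subgroup.map_map]
  congr 1
  ext z
  simp [MulAut.conj_apply, mul_assoc]

lemma map_conj_self {H : Subgroup W} {a : W} (ha : a ∈ H) :
    H.map (MulAut.conj a).toMonoidHom = H := by
  ext x
  rw [Subgroup.mem_map]
  constructor
  · rintro ⟨y, hy, rfl⟩
    rw [MulEquiv.coe_toMonoidHom, MulAut.conj_apply]
    exact mul_mem (mul_mem ha hy) (inv_mem ha)
  · intro hx
    refine ⟨a⁻¹ * x * a, mul_mem (mul_mem (inv_mem ha) hx) ha, ?_⟩
    rw [MulEquiv.coe_toMonoidHom, MulAut.conj_apply]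
    group

lemma exists_min_double_coset (I J : Set B) (u : W) :
    ∃ a ∈ WI cs I, ∃ b ∈ WI cs J,
      ∀ a' ∈ WI cs I, ∀ b' ∈ WI cs J,
        ℓ (a * (u * b)) ≤ ℓ (a' * ((a * (u * b)) * b')) := by
  have hex : ∃ n, ∃ a, a ∈ WI cs I ∧ ∃ b, b ∈ WI cs J ∧ ℓ (a * (u * b)) = n :=
    ⟨ℓ (1 * (u * 1)), 1, one_mem _, 1, one_mem _, rfl⟩
  obtain ⟨a, ha, b, hb, hab⟩ := Nat.find_spec hex
  refine ⟨a, ha, b, hb, ?_⟩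
  intro a' ha' b' hb'
  rw [hab]
  apply Nat.find_min' hex
  refine ⟨a' * a, mul_mem ha' ha, b * b', mul_mem hb hb', ?_⟩
  congr 1
  group

end CoxAux

/-- In a Coxeter system, the intersection of two parabolic subgroups (conjugates
`w₁ W_{I₁} w₁⁻¹` and `w₂ W_{I₂} w₂⁻¹` of standard parabolic subgroups) is again a parabolic
subgroup. -/
theorem stmt_10 {B W : Type*} [Group W] {M : CoxeterMatrix B} (cs : CoxeterSystem M W)
    (w₁ w₂ : W) (I₁ I₂ : Set B) :
    ∃ (w : W) (I : Set B),
      (Subgroup.closure (cs.simple '' I₁)).map (MulAut.conj w₁).toMonoidHom ⊓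
        (Subgroup.closure (cs.simple '' I₂)).map (MulAut.conj w₂).toMonoidHom =
      (Subgroup.closure (cs.simple '' I)).map (MulAut.conj w).toMonoidHom := by
  classical
  set H₁ : Subgroup W := Subgroup.closure (cs.simple '' I₁) with hH₁
  set H₂ : Subgroup W := Subgroup.closure (cs.simple '' I₂) with hH₂
  set u : W := w₁⁻¹ * w₂ with hu
  obtain ⟨a, ha, b, hb, hmin0⟩ := CoxAux.exists_min_double_coset cs I₁ I₂ u
  set d : W := a * (u * b) with hd
  have hkil := CoxAux.kilmoyer cs hmin0
  set K : Set B := {i : B | i ∈ I₁ ∧ ∃ j ∈ I₂, d * cs.simple j * d⁻¹ = cs.simple i} with hK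
  refine ⟨w₁ * a⁻¹, K, ?_⟩
  have hw₂ : w₂ = w₁ * u := by rw [hu]; group
  have hu' : (a⁻¹ * d) * b⁻¹ = u := by rw [hd]; group
  have hinj1 : Function.Injective ⇑(MulAut.conj w₁).toMonoidHom :=
    (MulAut.conj w₁).injective
  have hinja : Function.Injective ⇑(MulAut.conj a⁻¹).toMonoidHom :=
    (MulAut.conj a⁻¹).injective
  -- rewrite the second factor through the minimal coset representative
  have hstep : H₂.map (MulAut.conj u).toMonoidHom
      = (H₂.map (MulAut.conj d).toMonoidHom).map (MulAut.conj a⁻¹).toMonoidHom := by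
    rw [CoxAux.conj_map_conj_map]
    have h2 : H₂.map (MulAut.conj (a⁻¹ * d)).toMonoidHom
        = (H₂.map (MulAut.conj b⁻¹).toMonoidHom).map
            (MulAut.conj (a⁻¹ * d)).toMonoidHom := by
      rw [CoxAux.map_conj_self (inv_mem hb)]
    rw [h2, CoxAux.conj_map_conj_map, hu']
  calc H₁.map (MulAut.conj w₁).toMonoidHom ⊓ H₂.map (MulAut.conj w₂).toMonoidHom
      = H₁.map (MulAut.conj w₁).toMonoidHom ⊓
        ((H₂.map (MulAut.conj u).toMonoidHom).map (MulAut.conj w₁).toMonoidHom) := by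
        rw [CoxAux.conj_map_conj_map, ← hw₂]
    _ = (H₁ ⊓ H₂.map (MulAut.conj u).toMonoidHom).map (MulAut.conj w₁).toMonoidHom := by
        rw [Subgroup.map_inf H₁ (H₂.map (MulAut.conj u).toMonoidHom)
          (MulAut.conj w₁).toMonoidHom hinj1]
    _ = (H₁.map (MulAut.conj a⁻¹).toMonoidHom ⊓
          ((H₂.map (MulAut.conj d).toMonoidHom).map
            (MulAut.conj a⁻¹).toMonoidHom)).map (MulAut.conj w₁).toMonoidHom := by
        rw [hstep, CoxAux.map_conj_self (inv_mem ha)]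
    _ = ((H₁ ⊓ H₂.map (MulAut.conj d).toMonoidHom).map
          (MulAut.conj a⁻¹).toMonoidHom).map (MulAut.conj w₁).toMonoidHom := by
        rw [Subgroup.map_inf H₁ (H₂.map (MulAut.conj d).toMonoidHom)
          (MulAut.conj a⁻¹).toMonoidHom hinja]
    _ = ((Subgroup.closure (cs.simple '' K)).map
          (MulAut.conj a⁻¹).toMonoidHom).map (MulAut.conj w₁).toMonoidHom := by
        rw [hkil]
    _ = (Subgroup.closure (cs.simple '' K)).map (MulAut.conj (w₁ * a⁻¹)).toMonoidHom := by
        rw [CoxAux.conj_map_conj_map]
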